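/- arXiv:1708.03936 — 2 statements merged into one kernel-verified Lean document; each statement's English description precedes it below -/
import Mathlib

section
/- For any X ⊆ ℝⁿ and A ⊆ ℝ, the algebraic trace part of X over A admits the alternative expression X^{alg_A}_t = ⋃{Y ⊆ X : cl(Y) is an A-set}. -/
open FirstOrder FirstOrder.Language Set Polynomial

noncomputable section

/-! ## Background definitions -/

/-! ### The real ordered field as a first-order structure -/

/-- The language of the real ordered field `⟨ℝ, <, +, ·⟩`: ring symbols together with an
order symbol. -/
abbrev realFieldLang : FirstOrder.Language := Language.ring.sum Language.order

instance : Language.ring.Structure ℝ :=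
  (FirstOrder.Ring.compatibleRingOfRing ℝ).toStructure

instance : Language.order.Structure ℝ :=
  Language.orderStructure (M := ℝ)

/-- A set `X ⊆ ℝ^α` is semialgebraic with parameters from `A`, i.e. definable with
parameters from `A` in the real ordered field `⟨ℝ, <, +, ·⟩`. -/
def SemialgebraicOn (A : Set ℝ) {α : Type} (X : Set (α → ℝ)) : Prop :=
  A.Definable realFieldLang X

/-- The set of real numbers that are rational, used as the parameter set `ℚ ⊆ ℝ`. -/
def ratParams : Set ℝ := Set.range ((↑) : ℚ → ℝ)

/-! ### The language with one extra unary predicate, and pairs `⟨𝓡, P⟩` -/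

/-- The language consisting of a single unary relation symbol. -/
def predLang : FirstOrder.Language where
  Functions := fun _ => Empty
  Relations := fun n => match n with
    | 1 => PUnit
    | _ => Empty

/-- The `predLang`-structure on `ℝ` interpreting the unary predicate as `P`. -/
def predStructure (P : Set ℝ) : predLang.Structure ℝ where
  funMap := fun {_} f _ => f.elim
  RelMap := fun {n} r x =>
    match n, r with
    | 1, _ => x 0 ∈ P

/-- `X` is definable (with parameters from `A`) in the expansion `⟨𝓡, P⟩` of the structure
`𝓡` (with language `L`) by a unary predicate for `P`. -/
def DefinablePair (L : FirstOrder.Language) [L.Structure ℝ] (P : Set ℝ) (A : Set ℝ)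
    {α : Type} (X : Set (α → ℝ)) : Prop :=
  letI := predStructure P
  A.Definable (L.sum predLang) X

/-- `Y ⊆ ℝ^α` is `∅`-definable in `⟨ℝ̄, P⟩`, the expansion of the real ordered field
`ℝ̄ = ⟨ℝ, <, +, ·⟩` by a unary predicate for `P`. -/
def ZeroDefinableRealPair (P : Set ℝ) {α : Type} (Y : Set (α → ℝ)) : Prop :=
  letI := predStructure P
  (∅ : Set ℝ).Definable (realFieldLang.sum predLang) Y

/-! ### Definable closure and independence -/

/-- The definable closure of `A ⊆ ℝ` in the structure `𝓡` with language `L`: the set of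
reals `b` such that `{b}` is definable over `A`. -/
def dclR (L : FirstOrder.Language) [L.Structure ℝ] (A : Set ℝ) : Set ℝ :=
  {b | A.Definable L {x : Fin 1 → ℝ | x 0 = b}}

/-- The definable closure of `A ⊆ ℝ` in the pair `⟨𝓡, P⟩`. -/
def dclPair (L : FirstOrder.Language) [L.Structure ℝ] (P : Set ℝ) (A : Set ℝ) : Set ℝ :=
  {b | DefinablePair L P A {x : Fin 1 → ℝ | x 0 = b}}

/-- `X ⊆ ℝ` is dcl-independent over `A` (in `𝓡`). -/
def DclIndepOver (L : FirstOrder.Language) [L.Structure ℝ] (A : Set ℝ) (X : Set ℝ) : Prop :=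
  ∀ x ∈ X, x ∉ dclR L ((X \ {x}) ∪ A)

/-- `X ⊆ ℝ` is dcl-independent (in `𝓡`). -/
def DclIndep (L : FirstOrder.Language) [L.Structure ℝ] (X : Set ℝ) : Prop :=
  ∀ x ∈ X, x ∉ dclR L (X \ {x})

/-- `P` is the underlying set of an elementary substructure of `𝓡`. -/
def IsElemSubstructureSet (L : FirstOrder.Language) [L.Structure ℝ] (P : Set ℝ) : Prop :=
  ∃ S : L.ElementarySubstructure ℝ, (S : Set ℝ) = P

/-! ### O-minimality -/

/-- The structure on `ℝ` with language `L` is o-minimal: every definable (with parameters)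
subset of `ℝ` has finite frontier, i.e. it is a finite union of points and open intervals. -/
def IsOMinimal (L : FirstOrder.Language) [L.Structure ℝ] : Prop :=
  ∀ X : Set (Fin 1 → ℝ), (Set.univ : Set ℝ).Definable L X → (frontier X).Finite

/-! ### A-sets, algebraic parts and algebraic trace parts -/

/-- An `A`-set: an infinite connected semialgebraic subset of `ℝⁿ` definable over `A`.
(An `ℝ`-set is an `A`-set for `A = univ`.) -/
def IsASet (A : Set ℝ) {n : ℕ} (T : Set (Fin n → ℝ)) : Prop :=
  T.Infinite ∧ IsConnected T ∧ SemialgebraicOn A T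

/-- The algebraic part of `X` over `A`: the union of all `A`-subsets of `X`.
For `A = univ` this is the algebraic part `X^alg` of `X`. -/
def algPartOver (A : Set ℝ) {n : ℕ} (X : Set (Fin n → ℝ)) : Set (Fin n → ℝ) :=
  ⋃ T ∈ {T : Set (Fin n → ℝ) | IsASet A T ∧ T ⊆ X}, T

/-- The algebraic trace part of `X` over `A`: the union of all traces `X ∩ T` of `A`-sets `T`
in which `X` is dense.  For `A = univ` this is the algebraic trace part `X^alg_t` of `X`. -/
def algTracePart (A : Set ℝ) {n : ℕ} (X : Set (Fin n → ℝ)) : Set (Fin n → ℝ) :=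
  ⋃ T ∈ {T : Set (Fin n → ℝ) | IsASet A T ∧ T ⊆ closure (X ∩ T)}, X ∩ T

/-! ### Heights and point counting -/

/-- The Mahler measure of an integer polynomial: the absolute value of the leading coefficient
times the product of `max 1 |z|` over the complex roots `z` (with multiplicity). -/
def mahlerMeasureInt (f : Polynomial ℤ) : ℝ :=
  |(f.leadingCoeff : ℝ)| *
    (((f.map (Int.castRingHom ℂ)).roots).map (fun z => max 1 ‖z‖)).prod

/-- The primitive integer minimal polynomial of a real number `α` (zero if `α` is not
algebraic over `ℚ`). -/
def intMinpoly (α : ℝ) : Polynomial ℤ :=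
  (IsLocalization.integerNormalization (nonZeroDivisors ℤ) (minpoly ℚ α)).primPart

/-- The multiplicative height `H(α) = exp h(α)` of an algebraic real number `α`, where `h` is
the absolute logarithmic height: concretely, `H(α)` is the `d`-th root of the Mahler measure
of the primitive integer minimal polynomial of `α`, where `d = [ℚ(α) : ℚ]`. -/
def multHeight (α : ℝ) : ℝ :=
  (mahlerMeasureInt (intMinpoly α)) ^ (((minpoly ℚ α).natDegree : ℝ)⁻¹)

/-- `X(k, T)`: the set of points of `X` all of whose coordinates are algebraic of degree at
most `k` over `ℚ` and of multiplicative height at most `T`.  `N_k(X, T)` is its cardinality. -/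
def heightPoints {n : ℕ} (X : Set (Fin n → ℝ)) (k : ℕ) (T : ℝ) : Set (Fin n → ℝ) :=
  {x ∈ X | ∀ i, IsAlgebraic ℚ (x i) ∧ (minpoly ℚ (x i)).natDegree ≤ k ∧ multHeight (x i) ≤ T}

/-- `X` has few algebraic points: for every `k ≥ 1` and `ε > 0` there is a constant `C` with
`N_k(X, T) ≤ C · T ^ ε` for all `T > 1`. -/
def FewAlgebraicPoints {n : ℕ} (X : Set (Fin n → ℝ)) : Prop :=
  ∀ k : ℕ, 1 ≤ k → ∀ ε : ℝ, 0 < ε → ∃ C : ℝ, ∀ T : ℝ, 1 < T →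
    (heightPoints X k T).Finite ∧ ((heightPoints X k T).ncard : ℝ) ≤ C * T ^ ε

/-- `X` has many algebraic points: it does not have few algebraic points. -/
def ManyAlgebraicPoints {n : ℕ} (X : Set (Fin n → ℝ)) : Prop :=
  ¬ FewAlgebraicPoints X

/-- The set of algebraic points of `ℝⁿ`: points all of whose coordinates are algebraic
numbers. -/
def algebraicPoints {n : ℕ} : Set (Fin n → ℝ) :=
  {x | ∀ i, IsAlgebraic ℚ (x i)}

/-! ### Cells and dimension -/

/-- Cells in `ℝⁿ` with respect to a structure with language `L` on `ℝ`: the unique cell in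
`ℝ⁰` is the whole (one-point) space, and a cell in `ℝ^{n+1}` is a definable set which is
either the graph of a continuous function on a cell of `ℝⁿ`, or a band between two
continuous `ℝ ∪ {±∞}`-valued functions on a cell of `ℝⁿ`. -/
def IsCell (L : FirstOrder.Language) [L.Structure ℝ] : ∀ n : ℕ, Set (Fin n → ℝ) → Prop
  | 0, X => X = Set.univ
  | (n + 1), X =>
      (Set.univ : Set ℝ).Definable L X ∧
      ∃ C : Set (Fin n → ℝ), IsCell L n C ∧
        ((∃ f : (Fin n → ℝ) → ℝ, ContinuousOn f C ∧
            X = {x : Fin (n+1) → ℝ | Fin.init x ∈ C ∧ x (Fin.last n) = f (Fin.init x)}) ∨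
          (∃ f g : (Fin n → ℝ) → EReal, ContinuousOn f C ∧ ContinuousOn g C ∧
            (∀ y ∈ C, f y < g y) ∧
            X = {x : Fin (n+1) → ℝ | Fin.init x ∈ C ∧ f (Fin.init x) < (x (Fin.last n) : EReal) ∧
                  (x (Fin.last n) : EReal) < g (Fin.init x)}))

/-- An `ℝ`-set: an infinite connected semialgebraic subset of `ℝⁿ`. -/
def IsRSet {n : ℕ} (W : Set (Fin n → ℝ)) : Prop :=
  IsASet Set.univ W

/-- An `ℝ`-cell: an `ℝ`-set which is a (semialgebraic) cell. -/
def IsRCell {n : ℕ} (Z : Set (Fin n → ℝ)) : Prop :=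
  IsRSet Z ∧ IsCell realFieldLang n Z

/-- `X ⊆ ℝⁿ` has dimension at least `d`: some coordinate projection of `X` onto `ℝ^d` has
nonempty interior. -/
def hasDimGE {n : ℕ} (X : Set (Fin n → ℝ)) (d : ℕ) : Prop :=
  ∃ e : Fin d → Fin n, Function.Injective e ∧ (interior ((fun x => x ∘ e) '' X)).Nonempty

/-- The (o-minimal) dimension of `X ⊆ ℝⁿ`: the largest `d` such that some coordinate
projection of `X` onto `ℝ^d` has nonempty interior; the empty set has dimension `⊥ = -∞`. -/
def odim {n : ℕ} (X : Set (Fin n → ℝ)) : WithBot ℕ :=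
  @ite _ (X = ∅) (Classical.dec _) ⊥ ↑(sSup {d : ℕ | hasDimGE X d})

/-- An open box in `ℝⁿ`: a product of open intervals. -/
def IsOpenBox {n : ℕ} (B : Set (Fin n → ℝ)) : Prop :=
  ∃ a b : Fin n → ℝ, B = {x | ∀ i, x i ∈ Set.Ioo (a i) (b i)}

/-- The local dimension `dim_x(Z)` of `Z` at a point `x ∈ Z`: the minimum of `dim (B ∩ Z)`
over all open boxes `B` containing `x`. -/
def localDim {n : ℕ} (Z : Set (Fin n → ℝ)) (x : Fin n → ℝ) : ℕ :=
  sInf {d : ℕ | ∃ B, IsOpenBox B ∧ x ∈ B ∧ odim (B ∩ Z) = (d : WithBot ℕ)}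

/-! ### Definable functions -/

/-- A real-valued function `f` on `ℝ^α` is `L`-definable on the domain `D`: its graph over `D`
is a definable set. -/
def DefinableRealFunOn (L : FirstOrder.Language) [L.Structure ℝ] {α : Type}
    (D : Set (α → ℝ)) (f : (α → ℝ) → ℝ) : Prop :=
  (Set.univ : Set ℝ).Definable L
    {z : Option α → ℝ | (fun i => z (some i)) ∈ D ∧ z none = f (fun i => z (some i))}

/-- A map `f : ℝ^α → ℝ^β` is `L`-definable on the domain `D`: its graph over `D` is a
definable set. -/
def DefinableFunOn (L : FirstOrder.Language) [L.Structure ℝ] {α β : Type}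
    (D : Set (α → ℝ)) (f : (α → ℝ) → (β → ℝ)) : Prop :=
  (Set.univ : Set ℝ).Definable L
    {z : α ⊕ β → ℝ | (fun i => z (Sum.inl i)) ∈ D ∧
      (fun j => z (Sum.inr j)) = f (fun i => z (Sum.inl i))}

/-- A map `f : ℝ^α → ℝ^β` is definable in the pair `⟨𝓡, P⟩` on the domain `D`. -/
def DefinablePairFunOn (L : FirstOrder.Language) [L.Structure ℝ] (P : Set ℝ) {α β : Type}
    (D : Set (α → ℝ)) (f : (α → ℝ) → (β → ℝ)) : Prop :=
  DefinablePair L P Set.univ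
    {z : α ⊕ β → ℝ | (fun i => z (Sum.inl i)) ∈ D ∧
      (fun j => z (Sum.inr j)) = f (fun i => z (Sum.inl i))}

/-! ### Large and small sets -/

/-- `X ⊆ ℝⁿ` is large: for some `m` there is an `𝓛`-definable function `f : ℝ^{nm} → ℝ`
such that `f(X^m)` contains an open interval. -/
def IsLarge (L : FirstOrder.Language) [L.Structure ℝ] {n : ℕ} (X : Set (Fin n → ℝ)) : Prop :=
  ∃ (m : ℕ) (f : (Fin m × Fin n → ℝ) → ℝ),
    DefinableRealFunOn L Set.univ f ∧
    ∃ a b : ℝ, a < b ∧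
      Set.Ioo a b ⊆ f '' {z : Fin m × Fin n → ℝ | ∀ j : Fin m, (fun i => z (j, i)) ∈ X}

/-- `X ⊆ ℝⁿ` is small: it is not large. -/
def IsSmall (L : FirstOrder.Language) [L.Structure ℝ] {n : ℕ} (X : Set (Fin n → ℝ)) : Prop :=
  ¬ IsLarge L X

/-- A set `S ⊆ ℝ` of reals is small. -/
def IsSmall1 (L : FirstOrder.Language) [L.Structure ℝ] (S : Set ℝ) : Prop :=
  IsSmall L {x : Fin 1 → ℝ | x 0 ∈ S}

/-! ### Supercones and their shells -/

/-- `IsSuperconeShell L P k J Z`: `J ⊆ ℝ^k` is a supercone (definable in the pair `⟨𝓡, P⟩`)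
with shell `Z = sh(J)`.  `ℝ⁰` is a supercone with shell `ℝ⁰`; a definable `J ⊆ ℝ^{k+1}` is a
supercone if `π(J)` is a supercone with shell `Z'` and there are continuous
`h₁ < h₂ : sh(π(J)) → ℝ ∪ {±∞}` with `𝓛`-definable band `Z = (h₁, h₂)_{Z'}` such that every
fiber `J_a`, `a ∈ π(J)`, is contained and co-small in `(h₁(a), h₂(a))`. -/
def IsSuperconeShell (L : FirstOrder.Language) [L.Structure ℝ] (P : Set ℝ) :
    ∀ k : ℕ, Set (Fin k → ℝ) → Set (Fin k → ℝ) → Prop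
  | 0, J, Z => J = Set.univ ∧ Z = Set.univ
  | (k + 1), J, Z =>
      DefinablePair L P Set.univ J ∧
      ∃ Z' : Set (Fin k → ℝ), IsSuperconeShell L P k (Fin.init '' J) Z' ∧
        ∃ h₁ h₂ : (Fin k → ℝ) → EReal, ContinuousOn h₁ Z' ∧ ContinuousOn h₂ Z' ∧
          (∀ a ∈ Z', h₁ a < h₂ a) ∧
          Z = {x : Fin (k+1) → ℝ | Fin.init x ∈ Z' ∧ h₁ (Fin.init x) < (x (Fin.last k) : EReal) ∧
                (x (Fin.last k) : EReal) < h₂ (Fin.init x)} ∧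
          (Set.univ : Set ℝ).Definable L Z ∧
          ∀ a ∈ Fin.init '' J,
            {t : ℝ | Fin.snoc a t ∈ J} ⊆ {t : ℝ | h₁ a < (t : EReal) ∧ (t : EReal) < h₂ a} ∧
            IsSmall1 L ({t : ℝ | h₁ a < (t : EReal) ∧ (t : EReal) < h₂ a} \
              {t : ℝ | Fin.snoc a t ∈ J})

/-- `J ⊆ ℝ^k` is a supercone. -/
def IsSupercone (L : FirstOrder.Language) [L.Structure ℝ] (P : Set ℝ) (k : ℕ)
    (J : Set (Fin k → ℝ)) : Prop :=
  ∃ Z, IsSuperconeShell L P k J Z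

/-! ### Uniform families, cones and H-cones -/

/-- The fiber of a family `K ⊆ ℝ^{m+k}` over `g ∈ ℝ^m`. -/
def famFiber {m k : ℕ} (K : Set (Fin (m + k) → ℝ)) (g : Fin m → ℝ) : Set (Fin k → ℝ) :=
  {t | Fin.append g t ∈ K}

/-- The projection of `K ⊆ ℝⁿ` onto the first `j` coordinates. -/
def projFirst {n : ℕ} (j : ℕ) (h : j ≤ n) (K : Set (Fin n → ℝ)) : Set (Fin j → ℝ) :=
  (fun (x : Fin n → ℝ) (i : Fin j) => x (Fin.castLE h i)) '' K

/-- The first `m` coordinates of a point of `ℝ^{m+k}`. -/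
def firstPart {m k : ℕ} (z : Fin (m + k) → ℝ) : Fin m → ℝ :=
  fun i => z (Fin.castLE (Nat.le_add_right m k) i)

/-- `K = ⋃_{g ∈ S} {g} × J_g ⊆ ℝ^{m+k}` is a uniform definable family of supercones indexed
by `S`, with shell `V`: `V` is a cell containing `K` such that for every `g ∈ S` and
`0 < j ≤ k`, `cl(π_{m+j}(K)_g) = cl(π_{m+j}(V)_g)`. -/
def IsUniformFamilyShell (L : FirstOrder.Language) [L.Structure ℝ] (P : Set ℝ) (m k : ℕ)
    (S : Set (Fin m → ℝ)) (K V : Set (Fin (m + k) → ℝ)) : Prop :=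
  DefinablePair L P Set.univ K ∧
  projFirst m (Nat.le_add_right m k) K ⊆ S ∧
  (∀ g ∈ S, IsSupercone L P k (famFiber K g)) ∧
  IsCell L (m + k) V ∧ K ⊆ V ∧
  ∀ g ∈ S, ∀ j : ℕ, 0 < j → ∀ hj : j ≤ k,
    closure (famFiber (projFirst (m + j) (Nat.add_le_add_left hj m) K) g) =
      closure (famFiber (projFirst (m + j) (Nat.add_le_add_left hj m) V) g)

/-- `(S, K, V, h)` represents a `k`-cone in `ℝⁿ`: `S ⊆ ℝᵐ` is definable and small,
`K` is a uniform family of supercones over `S` with shell `V`, and `h : V → ℝⁿ` is an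
`𝓛`-definable continuous map which is injective on each fiber `V_g`, `g ∈ S`.  The cone
itself is the image `h(K)`. -/
def IsConeRep (L : FirstOrder.Language) [L.Structure ℝ] (P : Set ℝ) {m k n : ℕ}
    (S : Set (Fin m → ℝ)) (K V : Set (Fin (m + k) → ℝ))
    (h : (Fin (m + k) → ℝ) → (Fin n → ℝ)) : Prop :=
  DefinablePair L P Set.univ S ∧ IsSmall L S ∧
  IsUniformFamilyShell L P m k S K V ∧
  ContinuousOn h V ∧ DefinableFunOn L V h ∧
  ∀ g ∈ S, Set.InjOn (fun t : Fin k → ℝ => h (Fin.append g t)) (famFiber V g)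

/-- `C ⊆ ℝⁿ` is a `k`-cone. -/
def IsKCone (L : FirstOrder.Language) [L.Structure ℝ] (P : Set ℝ) (k : ℕ) {n : ℕ}
    (C : Set (Fin n → ℝ)) : Prop :=
  ∃ (m : ℕ) (S : Set (Fin m → ℝ)) (K V : Set (Fin (m + k) → ℝ))
    (h : (Fin (m + k) → ℝ) → (Fin n → ℝ)),
    IsConeRep L P S K V h ∧ C = h '' K

/-- `(S, K, V, h)` represents a `k`-H-cone: a `k`-cone with `S ⊆ Pᵐ` and `h` injective
on `K`. -/
def IsHConeRep (L : FirstOrder.Language) [L.Structure ℝ] (P : Set ℝ) {m k n : ℕ}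
    (S : Set (Fin m → ℝ)) (K V : Set (Fin (m + k) → ℝ))
    (h : (Fin (m + k) → ℝ) → (Fin n → ℝ)) : Prop :=
  IsConeRep L P S K V h ∧ (∀ g ∈ S, ∀ i, g i ∈ P) ∧ Set.InjOn h K

/-- The large dimension of `X ⊆ ℝⁿ`: the maximum `k` such that `X` contains a `k`-cone
(`⊥ = -∞` for the empty set). -/
def ldim (L : FirstOrder.Language) [L.Structure ℝ] (P : Set ℝ) {n : ℕ}
    (X : Set (Fin n → ℝ)) : WithBot ℕ :=
  @ite _ (X = ∅) (Classical.dec _) ⊥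
    ↑(sSup {k : ℕ | ∃ C : Set (Fin n → ℝ), C ⊆ X ∧ IsKCone L P k C})

/-! ## The statement -/


section aux


lemma leAdd_definable (A : Set ℝ) :
    A.Definable realFieldLang {w : Fin 3 → ℝ | w 0 ≤ w 1 + w 2} := by
  apply Definable.mono (A := (∅ : Set ℝ)) _ (empty_subset A)
  rw [Set.empty_definable_iff]
  refine ⟨Relations.boundedFormula₂ (Sum.inr Language.leSymb)
    (Term.var (Sum.inl 0))
    (Functions.apply₂ (Sum.inl Ring.addFunc) (Term.var (Sum.inl 1)) (Term.var (Sum.inl 2))), ?_⟩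
  ext w
  simp [Formula.Realize, BoundedFormula.realize_rel₂, Term.realize_functions_apply₂]
  exact Iff.rfl

lemma nonpos_definable (A : Set ℝ) :
    A.Definable realFieldLang {w : Fin 1 → ℝ | w 0 ≤ 0} := by
  apply Definable.mono (A := (∅ : Set ℝ)) _ (empty_subset A)
  rw [Set.empty_definable_iff]
  refine ⟨Relations.boundedFormula₂ (Sum.inr Language.leSymb)
    (Term.var (Sum.inl 0))
    (Constants.term (Sum.inl Ring.zeroFunc)), ?_⟩
  ext w
  simp [Formula.Realize, BoundedFormula.realize_rel₂]
  rfl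

lemma mem_closure_iff_eps {n : ℕ} (T : Set (Fin n → ℝ)) (x : Fin n → ℝ) :
    x ∈ closure T ↔
      ∀ ε : ℝ, ε ≤ 0 ∨ ∃ y ∈ T, ∀ i, x i ≤ y i + ε ∧ y i ≤ x i + ε := by
  constructor
  · intro h ε
    by_cases hε : ε ≤ 0
    · exact Or.inl hε
    · push_neg at hε
      obtain ⟨y, hyT, hxy⟩ := Metric.mem_closure_iff.mp h ε hε
      refine Or.inr ⟨y, hyT, fun i => ?_⟩
      have h1 : dist (x i) (y i) ≤ dist x y := dist_le_pi_dist x y i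
      have h2 : |x i - y i| < ε := lt_of_le_of_lt (by rwa [Real.dist_eq] at h1) hxy
      rw [abs_sub_lt_iff] at h2
      constructor <;> linarith [h2.1, h2.2]
  · intro h
    rw [Metric.mem_closure_iff]
    intro ε hε
    rcases h (ε / 2) with h0 | ⟨y, hyT, hy⟩
    · linarith
    · refine ⟨y, hyT, ?_⟩
      have : dist x y ≤ ε / 2 := by
        rw [dist_pi_le_iff (by linarith)]
        intro i
        rw [Real.dist_eq, abs_sub_le_iff]
        constructor <;> linarith [(hy i).1, (hy i).2]
      linarith

lemma semialgebraicOn_closure {n : ℕ} {A : Set ℝ} {T : Set (Fin n → ℝ)}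
    (hT : SemialgebraicOn A T) : SemialgebraicOn A (closure T) := by
  classical
  -- γ: the variables x together with ε; β: also the variables y
  let γ := Fin n ⊕ Unit
  let β := γ ⊕ Fin n
  -- the set of z = (x, ε, y) with y ∈ T
  have hTy : A.Definable realFieldLang
      ((fun g : β → ℝ => g ∘ (Sum.inr : Fin n → β)) ⁻¹' T) :=
    hT.preimage_comp _
  -- for each i, the two inequalities |x i - y i| ≤ ε
  have hB1 : ∀ i : Fin n, A.Definable realFieldLang
      {z : β → ℝ | z (Sum.inl (Sum.inl i)) ≤ z (Sum.inr i) + z (Sum.inl (Sum.inr ()))} := by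
    intro i
    have := (leAdd_definable A).preimage_comp
      (![Sum.inl (Sum.inl i), Sum.inr i, Sum.inl (Sum.inr ())] : Fin 3 → β)
    convert this using 1
    rfl
  have hB2 : ∀ i : Fin n, A.Definable realFieldLang
      {z : β → ℝ | z (Sum.inr i) ≤ z (Sum.inl (Sum.inl i)) + z (Sum.inl (Sum.inr ()))} := by
    intro i
    have := (leAdd_definable A).preimage_comp
      (![Sum.inr i, Sum.inl (Sum.inl i), Sum.inl (Sum.inr ())] : Fin 3 → β)
    convert this using 1
    rfl
  -- the conjunction
  set E : Set (β → ℝ) :=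
    ((fun g : β → ℝ => g ∘ (Sum.inr : Fin n → β)) ⁻¹' T) ∩
      ⋂ i ∈ (Finset.univ : Finset (Fin n)),
        ({z : β → ℝ | z (Sum.inl (Sum.inl i)) ≤ z (Sum.inr i) + z (Sum.inl (Sum.inr ()))} ∩
         {z : β → ℝ | z (Sum.inr i) ≤ z (Sum.inl (Sum.inl i)) + z (Sum.inl (Sum.inr ()))}) with hE
  have hEdef : A.Definable realFieldLang E :=
    hTy.inter (definable_biInter_finset (fun i => (hB1 i).inter (hB2 i)) _)
  -- ∃ y
  have hExdef : A.Definable realFieldLang ((fun g : β → ℝ => g ∘ (Sum.inl : γ → β)) '' E) :=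
    hEdef.image_comp_embedding ⟨Sum.inl, Sum.inl_injective⟩
  -- ε ≤ 0
  have hNP : A.Definable realFieldLang {u : γ → ℝ | u (Sum.inr ()) ≤ 0} := by
    have := (nonpos_definable A).preimage_comp (fun _ : Fin 1 => (Sum.inr () : γ))
    convert this using 1
    rfl
  set C : Set (γ → ℝ) :=
    {u : γ → ℝ | u (Sum.inr ()) ≤ 0} ∪ ((fun g : β → ℝ => g ∘ (Sum.inl : γ → β)) '' E) with hC
  have hCdef : A.Definable realFieldLang C := hNP.union hExdef
  -- ∀ ε
  set D : Set (Fin n → ℝ) :=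
    ((fun g : γ → ℝ => g ∘ (Sum.inl : Fin n → γ)) '' Cᶜ)ᶜ with hD
  have hDdef : A.Definable realFieldLang D :=
    (hCdef.compl.image_comp_embedding ⟨Sum.inl, Sum.inl_injective⟩).compl
  -- D = closure T
  have hmemC : ∀ u : γ → ℝ, u ∈ C ↔
      u (Sum.inr ()) ≤ 0 ∨ ∃ y ∈ T, ∀ i,
        u (Sum.inl i) ≤ y i + u (Sum.inr ()) ∧ y i ≤ u (Sum.inl i) + u (Sum.inr ()) := by
    intro u
    rw [hC]
    simp only [Set.mem_union, Set.mem_setOf_eq, Set.mem_image]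
    apply or_congr Iff.rfl
    constructor
    · rintro ⟨z, hz, rfl⟩
      rw [hE] at hz
      obtain ⟨hz1, hz2⟩ := hz
      simp only [Set.mem_iInter, Finset.mem_univ, Set.mem_inter_iff, Set.mem_setOf_eq,
        forall_const] at hz2
      exact ⟨z ∘ Sum.inr, hz1, fun i => ⟨(hz2 i).1, (hz2 i).2⟩⟩
    · rintro ⟨y, hyT, hy⟩
      refine ⟨Sum.elim u y, ?_, ?_⟩
      · rw [hE]
        constructor
        · exact hyT
        · simp only [Set.mem_iInter, Finset.mem_univ, Set.mem_inter_iff, Set.mem_setOf_eq,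
            forall_const]
          exact fun i => ⟨(hy i).1, (hy i).2⟩
      · ext c; rfl
  have hmemD : ∀ x : Fin n → ℝ, x ∈ D ↔ ∀ ε : ℝ, Sum.elim x (fun _ => ε) ∈ C := by
    intro x
    rw [hD]
    simp only [Set.mem_compl_iff, Set.mem_image, not_exists, not_and]
    constructor
    · intro h ε
      by_contra hc
      exact h (Sum.elim x fun _ => ε) hc (by ext c; rfl)
    · intro h u hu hux
      apply hu
      have : u = Sum.elim x (fun _ => u (Sum.inr ())) := by
        ext c
        rcases c with i | ⟨⟩
        · exact congrFun hux i
        · rfl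
      rw [this]
      exact h _
  have hDT : D = closure T := by
    ext x
    rw [hmemD x, mem_closure_iff_eps T x]
    apply forall_congr'
    intro ε
    rw [hmemC]
    simp
  show A.Definable realFieldLang (closure T)
  rw [← hDT]
  exact hDdef

end aux

theorem algTracePart_alternative
    {n : ℕ} (A : Set ℝ) (X : Set (Fin n → ℝ)) :
    algTracePart A X = ⋃ Y ∈ {Y : Set (Fin n → ℝ) | Y ⊆ X ∧ IsASet A (closure Y)}, Y := by
  ext x
  simp only [algTracePart, Set.mem_iUnion, Set.mem_setOf_eq, exists_prop, Set.mem_inter_iff]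
  constructor
  · rintro ⟨T, ⟨⟨hTinf, hTconn, hTsa⟩, hTcl⟩, hxX, hxT⟩
    refine ⟨X ∩ T, ⟨Set.inter_subset_left, ?_⟩, hxX, hxT⟩
    have hcl : closure (X ∩ T) = closure T :=
      subset_antisymm (closure_mono Set.inter_subset_right)
        ((closure_mono hTcl).trans closure_closure.subset)
    rw [hcl]
    exact ⟨hTinf.mono subset_closure, hTconn.closure, semialgebraicOn_closure hTsa⟩
  · rintro ⟨Y, ⟨hYX, hYset⟩, hxY⟩
    exact ⟨closure Y, ⟨hYset,
      closure_mono (Set.subset_inter hYX subset_closure)⟩, hYX hxY, subset_closure hxY⟩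

end
end

section
/- Let 𝓡 = ⟨ℝ, <, +, ·, …⟩ be an o-minimal expansion of the real ordered field and ⟨𝓡, P⟩ a dense pair, i.e., P is a dense proper elementary substructure of 𝓡. Let X = Y ∩ Pⁿ for some 𝓛-definable set Y ⊆ ℝⁿ. Then X ∩ Y^{alg_ℚ} ⊆ X^{alg_ℚ}_t. -/
open FirstOrder FirstOrder.Language Set Polynomial

noncomputable section

/-! ## Auxiliary lemmas for the proof -/

section Aux

open FirstOrder FirstOrder.Language FirstOrder.Ring Set

instance : FirstOrder.Ring.CompatibleRing ℝ := FirstOrder.Ring.compatibleRingOfRing ℝ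

/-- A natural number as a term in the language of rings. -/
def natTerm (α : Type*) : ℕ → Language.ring.Term α
  | 0 => 0
  | (m + 1) => natTerm α m + 1

@[simp] lemma realize_natTerm {α : Type*} (v : α → ℝ) : ∀ m : ℕ,
    (natTerm α m).realize v = (m : ℝ)
  | 0 => by simp [natTerm]
  | (m + 1) => by
      simp only [natTerm, FirstOrder.Ring.realize_add, FirstOrder.Ring.realize_one,
        realize_natTerm v m]
      push_cast; ring

/-- An integer as a term in the language of rings. -/
def intTerm (α : Type*) (z : ℤ) : Language.ring.Term α :=
  if z < 0 then -(natTerm α z.natAbs) else natTerm α z.natAbs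

@[simp] lemma realize_intTerm {α : Type*} (v : α → ℝ) (z : ℤ) :
    (intTerm α z).realize v = (z : ℝ) := by
  rcases lt_or_ge z 0 with h | h
  · have hz : ((z : ℝ)) < 0 := by exact_mod_cast h
    simp only [intTerm, if_pos h, FirstOrder.Ring.realize_neg, realize_natTerm,
      Nat.cast_natAbs]
    rw [Int.cast_abs, abs_of_neg hz, neg_neg]
  · have hz : (0 : ℝ) ≤ (z : ℝ) := by exact_mod_cast h
    simp only [intTerm, if_neg (not_lt.2 h), realize_natTerm, Nat.cast_natAbs]
    rw [Int.cast_abs, abs_of_nonneg hz]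

/-- The singleton of a rational number is `∅`-definable in the ring language. -/
lemma ring_definable_rat_singleton (q : ℚ) :
    (∅ : Set ℝ).Definable Language.ring {x : Fin 1 → ℝ | x 0 = (q : ℝ)} := by
  rw [Set.empty_definable_iff]
  refine ⟨Term.equal (natTerm (Fin 1) q.den * Term.var 0) (intTerm (Fin 1) q.num), ?_⟩
  ext v
  have hd : ((q.den : ℝ)) ≠ 0 := by
    exact_mod_cast q.den_ne_zero
  simp only [mem_setOf_eq, Formula.realize_equal, FirstOrder.Ring.realize_mul,
    realize_natTerm, Term.realize_var, realize_intTerm]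
  rw [Rat.cast_def, eq_div_iff hd, mul_comm]

/-- Every nonempty set definable over (the underlying set of) an elementary substructure
contains a point all of whose coordinates lie in the substructure. -/
lemma exists_mem_of_definable {L : Language} [L.Structure ℝ]
    (S : L.ElementarySubstructure ℝ) {n : ℕ} {Z : Set (Fin n → ℝ)}
    (hZ : ((S : Set ℝ)).Definable L Z) (hne : Z.Nonempty) :
    ∃ z ∈ Z, ∀ i, z i ∈ (S : Set ℝ) := by
  classical
  rw [Set.definable_iff_exists_formula_sum] at hZ
  obtain ⟨ψ, rfl⟩ := hZ
  obtain ⟨z, hz⟩ := hne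
  let u : ((S : Set ℝ) : Set ℝ) → S := fun a => ⟨a.1, a.2⟩
  have h1 : (ψ.iExs (Fin n)).Realize
      (((↑) : ((S : Set ℝ) : Set ℝ) → ℝ)) := by
    rw [Formula.realize_iExs]
    exact ⟨z, hz⟩
  have hcomp : ((S.subtype : S → ℝ) ∘ u) = (((↑) : ((S : Set ℝ) : Set ℝ) → ℝ)) := rfl
  have h2 : (ψ.iExs (Fin n)).Realize u :=
    (S.subtype.map_formula _ u).mp (by rw [hcomp] at *; exact h1)
  rw [Formula.realize_iExs] at h2
  obtain ⟨w, hw⟩ := h2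
  have h3 := (S.subtype.map_formula ψ (Sum.elim u w)).mpr hw
  refine ⟨fun i => (w i : ℝ), ?_, fun i => (w i).2⟩
  have heq : ((S.subtype : S → ℝ) ∘ Sum.elim u w)
      = Sum.elim (((↑) : ((S : Set ℝ) : Set ℝ) → ℝ)) (fun i => ((w i : ℝ))) := by
    funext a; cases a <;> rfl
  rw [heq] at h3
  exact h3

lemma definable_le_const {A : Set ℝ} {n : ℕ} (i : Fin n) {c : ℝ} (hc : c ∈ A) :
    A.Definable realFieldLang {x : Fin n → ℝ | c ≤ x i} := by
  refine ⟨Relations.formula₂ (Sum.inl (Sum.inr .le))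
    ((realFieldLang.con ⟨c, hc⟩)).term (Term.var i), ?_⟩
  ext x
  simp only [mem_setOf_eq, Formula.realize_rel₂, Term.realize_con, Term.realize_var]
  exact Iff.rfl

lemma definable_const_le {A : Set ℝ} {n : ℕ} (i : Fin n) {c : ℝ} (hc : c ∈ A) :
    A.Definable realFieldLang {x : Fin n → ℝ | x i ≤ c} := by
  refine ⟨Relations.formula₂ (Sum.inl (Sum.inr .le))
    (Term.var i) ((realFieldLang.con ⟨c, hc⟩)).term, ?_⟩
  ext x
  simp only [mem_setOf_eq, Formula.realize_rel₂, Term.realize_con, Term.realize_var]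
  exact Iff.rfl

lemma definable_box {A : Set ℝ} {n : ℕ} {a b : Fin n → ℝ}
    (ha : ∀ i, a i ∈ A) (hb : ∀ i, b i ∈ A) :
    A.Definable realFieldLang {x : Fin n → ℝ | ∀ i, a i ≤ x i ∧ x i ≤ b i} := by
  classical
  have hset : {x : Fin n → ℝ | ∀ i, a i ≤ x i ∧ x i ≤ b i}
      = ⋂ i ∈ (Finset.univ : Finset (Fin n)),
        ({x : Fin n → ℝ | a i ≤ x i} ∩ {x : Fin n → ℝ | x i ≤ b i}) := by
    ext x
    simp only [mem_setOf_eq, Set.mem_iInter, Set.mem_inter_iff, Finset.mem_univ,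
      true_implies]
  rw [hset]
  exact Set.definable_biInter_finset
    (fun i => (definable_le_const i (ha i)).inter (definable_const_le i (hb i))) _

/-- Points with all coordinates in a dense elementary substructure are dense in any set
definable over the substructure. -/
lemma subset_closure_inter_substructure {L : Language} [L.Structure ℝ]
    (S : L.ElementarySubstructure ℝ) (φ : realFieldLang →ᴸ L) [φ.IsExpansionOn ℝ]
    (hdense : Dense ((S : Set ℝ))) {n : ℕ} {T : Set (Fin n → ℝ)}
    (hT : ((S : Set ℝ)).Definable L T) :
    T ⊆ closure (T ∩ {x | ∀ i, x i ∈ (S : Set ℝ)}) := by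
  intro y hy
  rw [Metric.mem_closure_iff]
  intro ε hε
  have hhalf : (0 : ℝ) < ε / 2 := by positivity
  have hexa : ∀ i : Fin n, ∃ c, c ∈ (S : Set ℝ) ∧ c ∈ Ioo (y i - ε / 2) (y i) := by
    intro i
    obtain ⟨c, hc1, hc2⟩ := hdense.exists_mem_open
      (isOpen_Ioo (a := y i - ε / 2) (b := y i)) (nonempty_Ioo.2 (by linarith))
    exact ⟨c, hc1, hc2⟩
  choose a haS ha using hexa
  have hexb : ∀ i : Fin n, ∃ c, c ∈ (S : Set ℝ) ∧ c ∈ Ioo (y i) (y i + ε / 2) := by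
    intro i
    obtain ⟨c, hc1, hc2⟩ := hdense.exists_mem_open
      (isOpen_Ioo (a := y i) (b := y i + ε / 2)) (nonempty_Ioo.2 (by linarith))
    exact ⟨c, hc1, hc2⟩
  choose b hbS hb using hexb
  have hbox : ((S : Set ℝ)).Definable L {x : Fin n → ℝ | ∀ i, a i ≤ x i ∧ x i ≤ b i} :=
    (definable_box haS hbS).map_expansion φ
  obtain ⟨z, hzmem, hzS⟩ := exists_mem_of_definable S (hT.inter hbox)
    ⟨y, hy, fun i => ⟨(ha i).2.le, (hb i).1.le⟩⟩
  refine ⟨z, ⟨hzmem.1, hzS⟩, ?_⟩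
  rw [dist_pi_lt_iff hε]
  intro i
  rw [Real.dist_eq, abs_lt]
  have h1 := (hzmem.2 i).1
  have h2 := (hzmem.2 i).2
  have h3 := (ha i).1
  have h4 := (hb i).2
  constructor <;> linarith

end Aux

/-! ## The statement -/

theorem inter_algPart_subset_algTracePart
    (L : FirstOrder.Language) [L.Structure ℝ]
    (φ : realFieldLang →ᴸ L) [φ.IsExpansionOn ℝ]
    (homin : IsOMinimal L)
    (P : Set ℝ) (hdense : Dense P)
    (helem : IsElemSubstructureSet L P) (hproper : P ≠ Set.univ)
    {n : ℕ} (Y : Set (Fin n → ℝ)) (hY : (Set.univ : Set ℝ).Definable L Y)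
    (X : Set (Fin n → ℝ)) (hXY : X = Y ∩ {x | ∀ i, x i ∈ P}) :
    X ∩ algPartOver ratParams Y ⊆ algTracePart ratParams X := by
  obtain ⟨S, hS⟩ := helem
  rintro x ⟨hxX, hxalg⟩
  obtain ⟨T, hTmem, hxT⟩ := mem_iUnion₂.1 hxalg
  obtain ⟨hTset, hTY⟩ := hTmem
  have hrat : ratParams ⊆ (S : Set ℝ) := by
    rintro _ ⟨q, rfl⟩
    have hdef : ((S : Set ℝ)).Definable L {x : Fin 1 → ℝ | x 0 = (q : ℝ)} :=
      (((ring_definable_rat_singleton q).map_expansion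
        (LHom.sumInl : Language.ring →ᴸ realFieldLang)).map_expansion φ).mono
        (empty_subset _)
    obtain ⟨z, hz, hzS⟩ := exists_mem_of_definable S hdef ⟨fun _ => (q : ℝ), rfl⟩
    exact hz ▸ hzS 0
  have hTdef : ((S : Set ℝ)).Definable L T :=
    ((show ratParams.Definable realFieldLang T from hTset.2.2).map_expansion φ).mono hrat
  have hSdense : Dense ((S : Set ℝ)) := by rw [hS]; exact hdense
  have hclose : T ⊆ closure (X ∩ T) := by
    refine (subset_closure_inter_substructure S φ hSdense hTdef).trans (closure_mono ?_)
    rintro z ⟨hzT, hzS⟩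
    refine ⟨?_, hzT⟩
    rw [hXY]
    exact ⟨hTY hzT, fun i => hS ▸ hzS i⟩
  exact mem_iUnion₂.2 ⟨T, ⟨hTset, hclose⟩, hxX, hxT⟩

end
end
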